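/- Let z ∈ ℂ⁺ and suppose m(z) ∈ ℂ⁺ satisfies simultaneously the equations a = -(1/n)·Tr((z·Id_p + b·Σ)^{-1}·Σ), b = -1/(1+a), and m(z) = -(1/p)·Tr((z·Id_p + b·Σ)^{-1}), where Σ is a p×p Hermitian positive semidefinite matrix, n, p ≥ 1 are integers, and z·Id_p + b·Σ is invertible with 1 + a ≠ 0. Then m(z) satisfies the Marcenko–Pastur equation: m(z) = (1/p)·Tr[((1 - p/n - (p/n)·z·m(z))·Σ - z·Id_p)^{-1}], provided that matrix is invertible. -/

import Mathlib

open Matrix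
open scoped ComplexOrder

/-- If `m(z) ∈ ℂ⁺` satisfies the system `a = -(1/n)·Tr((z·Id + b·Σ)⁻¹·Σ)`,
`b = -1/(1+a)`, `m(z) = -(1/p)·Tr((z·Id + b·Σ)⁻¹)`, then it satisfies the
Marcenko–Pastur equation. -/
theorem stmt12 (p n : ℕ) (hp : 1 ≤ p) (hn : 1 ≤ n)
    (S : Matrix (Fin p) (Fin p) ℂ) (hS : S.PosSemidef)
    (z a b m : ℂ) (hz : 0 < z.im) (hm : 0 < m.im)
    (hinv1 : IsUnit (z • (1 : Matrix (Fin p) (Fin p) ℂ) + b • S))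
    (ha1 : 1 + a ≠ 0)
    (heqa : a = -((n : ℂ))⁻¹ *
      Matrix.trace ((z • (1 : Matrix (Fin p) (Fin p) ℂ) + b • S)⁻¹ * S))
    (heqb : b = -(1 + a)⁻¹)
    (heqm : m = -((p : ℂ))⁻¹ *
      Matrix.trace ((z • (1 : Matrix (Fin p) (Fin p) ℂ) + b • S)⁻¹))
    (hinv2 : IsUnit ((1 - (p : ℂ)/n - ((p : ℂ)/n) * z * m) • S
        - z • (1 : Matrix (Fin p) (Fin p) ℂ))) :
    m = ((p : ℂ))⁻¹ *
      Matrix.trace (((1 - (p : ℂ)/n - ((p : ℂ)/n) * z * m) • S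
        - z • (1 : Matrix (Fin p) (Fin p) ℂ))⁻¹) := by
  have hpC : (p : ℂ) ≠ 0 := Nat.cast_ne_zero.mpr (by omega)
  have hnC : (n : ℂ) ≠ 0 := Nat.cast_ne_zero.mpr (by omega)
  have hb0 : b ≠ 0 := by
    rw [heqb, neg_ne_zero]
    exact inv_ne_zero ha1
  set A : Matrix (Fin p) (Fin p) ℂ := z • (1 : Matrix (Fin p) (Fin p) ℂ) + b • S with hA
  have hAdet : IsUnit A.det := (Matrix.isUnit_iff_isUnit_det _).mp hinv1
  have hAinv : A⁻¹ * A = 1 := Matrix.nonsing_inv_mul A hAdet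
  -- key matrix identity: b • (A⁻¹ * S) = 1 - z • A⁻¹
  have hkey : b • (A⁻¹ * S) = 1 - z • A⁻¹ := by
    have : A⁻¹ * (b • S) = A⁻¹ * (A - z • 1) := by rw [hA, add_sub_cancel_left]
    rw [Matrix.mul_smul] at this
    rw [this, Matrix.mul_sub, hAinv, Matrix.mul_smul, Matrix.mul_one]
  -- take traces
  have htr : b * Matrix.trace (A⁻¹ * S) = (p : ℂ) - z * Matrix.trace A⁻¹ := by
    have := congrArg Matrix.trace hkey
    simpa [Matrix.trace_smul, Matrix.trace_sub, Matrix.trace_one, smul_eq_mul] using this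
  have htrA : Matrix.trace A⁻¹ = -(p : ℂ) * m := by
    rw [heqm, ← mul_assoc, neg_mul_neg, mul_inv_cancel₀ hpC, one_mul]
  have htrAS : Matrix.trace (A⁻¹ * S) = -(n : ℂ) * a := by
    rw [heqa, ← mul_assoc, neg_mul_neg, mul_inv_cancel₀ hnC, one_mul]
  have hba : b * (1 + a) = -1 := by
    rw [heqb]; field_simp
  -- derive b = -1 + p/n + (p/n) z m
  have hbval : b = -1 + (p : ℂ)/n + ((p : ℂ)/n) * z * m := by
    rw [htrAS, htrA] at htr
    -- htr : b * (-(n) * a) = p - z * (-(p) * m)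
    have hba' : b * a = -1 - b := by linear_combination hba
    have h1 : (n : ℂ) * b = p + z * p * m - n := by
      linear_combination htr + (n : ℂ) * hba'
    field_simp
    linear_combination h1
  -- the MP matrix equals -A
  have hmat : (1 - (p : ℂ)/n - ((p : ℂ)/n) * z * m) • S
      - z • (1 : Matrix (Fin p) (Fin p) ℂ) = -A := by
    have hc : (1 - (p : ℂ)/n - ((p : ℂ)/n) * z * m) = -b := by
      rw [hbval]; ring
    rw [hc, hA]
    module
  have hinvneg : (-A)⁻¹ = -(A⁻¹) := by
    apply Matrix.inv_eq_right_inv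
    rw [Matrix.neg_mul, Matrix.mul_neg, neg_neg, Matrix.mul_nonsing_inv A hAdet]
  rw [hmat, hinvneg, Matrix.trace_neg, htrA]
  field_simp
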